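/- arXiv:0901.2315 — 2 statements merged into one kernel-verified Lean document; each statement's English description precedes it below -/
import Mathlib

section
/- Let α ∈ (0,2]. For every finite Borel measure μ on ℝ, every t > 0 and every x ∈ ℝ: ∫_ℝ p_t^α(x − y) μ(dy) ≥ p_1^α(1) · t^{−1/α} · μ(B_{t^{1/α}}(x)). -/
open MeasureTheory

/-- The symmetric α-stable heat kernel on ℝ:
`p_t^α(x) = (2π)⁻¹ ∫_ℝ cos(xξ) exp(−t|ξ|^α) dξ`. -/
noncomputable def stableKernel (α t x : ℝ) : ℝ :=
  (2 * Real.pi)⁻¹ * ∫ ξ : ℝ, Real.cos (x * ξ) * Real.exp (-t * |ξ| ^ α)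

namespace StableAux

open Real Filter Set

/-- A "good" weight: integrable, with nonnegative cosine transform which is
radially nonincreasing. -/
structure Good (w : ℝ → ℝ) : Prop where
  integrable : Integrable w
  nonneg : ∀ x : ℝ, 0 ≤ ∫ ξ : ℝ, Real.cos (x * ξ) * w ξ
  mono : ∀ u x : ℝ, |u| ≤ |x| →
    (∫ ξ : ℝ, Real.cos (x * ξ) * w ξ) ≤ ∫ ξ : ℝ, Real.cos (u * ξ) * w ξ

lemma integrable_cos_mul {w : ℝ → ℝ} (hw : Integrable w) (x : ℝ) :
    Integrable fun ξ : ℝ => Real.cos (x * ξ) * w ξ := by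
  refine hw.bdd_mul (c := 1) ?_ (Filter.Eventually.of_forall fun ξ => by simpa [Real.norm_eq_abs] using Real.abs_cos_le_one (x * ξ))
  exact (Real.continuous_cos.comp (continuous_const.mul continuous_id)).aestronglyMeasurable

/-- The cosine transform of a Gaussian. -/
lemma integral_cos_gaussian {a : ℝ} (ha : 0 < a) (x : ℝ) :
    ∫ ξ : ℝ, Real.cos (x * ξ) * Real.exp (-a * ξ ^ 2)
      = Real.sqrt (π / a) * Real.exp (-x ^ 2 / (4 * a)) := by
  have hb : 0 < (a : ℂ).re := by simpa using ha
  have h := fourierIntegral_gaussian hb (x : ℂ)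
  have hint : Integrable fun ξ : ℝ =>
      Complex.exp (Complex.I * (x : ℂ) * (ξ : ℂ)) * Complex.exp (-(a : ℂ) * (ξ : ℂ) ^ 2) := by
    refine (integrable_cexp_quadratic hb (Complex.I * (x : ℂ)) 0).congr
      (Filter.Eventually.of_forall fun ξ => ?_)
    simp only [← Complex.exp_add]; congr 1; ring
  have hre : ∀ ξ : ℝ,
      (Complex.exp (Complex.I * (x : ℂ) * (ξ : ℂ)) * Complex.exp (-(a : ℂ) * (ξ : ℂ) ^ 2)).re
        = Real.cos (x * ξ) * Real.exp (-a * ξ ^ 2) := by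
    intro ξ
    have h1 : Complex.I * (x : ℂ) * (ξ : ℂ) = ((x * ξ : ℝ) : ℂ) * Complex.I := by
      push_cast; ring
    have h2 : -(a : ℂ) * (ξ : ℂ) ^ 2 = ((-a * ξ ^ 2 : ℝ) : ℂ) := by push_cast; ring
    rw [h1, h2, ← Complex.ofReal_exp, Complex.mul_re, Complex.exp_ofReal_mul_I_re,
      Complex.exp_ofReal_mul_I_im, Complex.ofReal_re, Complex.ofReal_im, mul_zero, sub_zero]
  calc ∫ ξ : ℝ, Real.cos (x * ξ) * Real.exp (-a * ξ ^ 2)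
      = ∫ ξ : ℝ, (Complex.exp (Complex.I * (x : ℂ) * (ξ : ℂ))
          * Complex.exp (-(a : ℂ) * (ξ : ℂ) ^ 2)).re :=
        integral_congr_ae (Filter.Eventually.of_forall fun ξ => (hre ξ).symm)
    _ = (((π : ℂ) / (a : ℂ)) ^ (1 / 2 : ℂ) * Complex.exp (-(x : ℂ) ^ 2 / (4 * (a : ℂ)))).re := by
        have hint2 := integral_re hint
        simp only [RCLike.re_to_complex] at hint2
        rw [hint2, h]
    _ = Real.sqrt (π / a) * Real.exp (-x ^ 2 / (4 * a)) := by
        have h3 : ((π : ℂ) / (a : ℂ)) = (((π / a : ℝ)) : ℂ) := by push_cast; ring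
        have h4 : ((π : ℂ) / (a : ℂ)) ^ (1 / 2 : ℂ) = (((π / a) ^ (1 / 2 : ℝ) : ℝ) : ℂ) := by
          rw [h3, show (1 / 2 : ℂ) = ((1 / 2 : ℝ) : ℂ) by push_cast; ring,
            Complex.ofReal_cpow (by positivity)]
        have h5 : Complex.exp (-(x : ℂ) ^ 2 / (4 * (a : ℂ)))
            = ((Real.exp (-x ^ 2 / (4 * a)) : ℝ) : ℂ) := by
          rw [show -(x : ℂ) ^ 2 / (4 * (a : ℂ)) = ((-x ^ 2 / (4 * a) : ℝ) : ℂ) by push_cast; ring,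
            ← Complex.ofReal_exp]
        rw [h4, h5, Real.sqrt_eq_rpow, ← Complex.ofReal_mul, Complex.ofReal_re]

lemma good_gaussian {a : ℝ} (ha : 0 < a) : Good (fun ξ => Real.exp (-a * ξ ^ 2)) := by
  refine ⟨integrable_exp_neg_mul_sq ha, ?_, ?_⟩
  · intro x; rw [integral_cos_gaussian ha]; positivity
  · intro u x hux
    rw [integral_cos_gaussian ha, integral_cos_gaussian ha]
    have h4 : (0 : ℝ) < 4 * a := by positivity
    have hsq : u ^ 2 ≤ x ^ 2 := by
      have := pow_le_pow_left₀ (abs_nonneg u) hux 2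
      simpa [sq_abs] using this
    have : -x ^ 2 / (4 * a) ≤ -u ^ 2 / (4 * a) := by
      rw [div_le_div_iff₀ h4 h4]; nlinarith
    exact mul_le_mul_of_nonneg_left (Real.exp_le_exp.2 this) (Real.sqrt_nonneg _)

lemma good_zero : Good (fun _ : ℝ => (0:ℝ)) := by
  refine ⟨integrable_zero _ _ _, ?_, ?_⟩ <;> simp

lemma Good.add {w₁ w₂ : ℝ → ℝ} (h₁ : Good w₁) (h₂ : Good w₂) :
    Good (fun ξ => w₁ ξ + w₂ ξ) := by
  have key : ∀ x : ℝ, (∫ ξ : ℝ, Real.cos (x * ξ) * (w₁ ξ + w₂ ξ))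
      = (∫ ξ : ℝ, Real.cos (x * ξ) * w₁ ξ) + ∫ ξ : ℝ, Real.cos (x * ξ) * w₂ ξ := by
    intro x
    simp only [mul_add]
    exact integral_add (integrable_cos_mul h₁.integrable x) (integrable_cos_mul h₂.integrable x)
  refine ⟨h₁.integrable.add h₂.integrable, ?_, ?_⟩
  · intro x; rw [key]; exact add_nonneg (h₁.nonneg x) (h₂.nonneg x)
  · intro u x hux; rw [key, key]; exact add_le_add (h₁.mono u x hux) (h₂.mono u x hux)

lemma Good.const_mul {w : ℝ → ℝ} {c : ℝ} (hc : 0 ≤ c) (h : Good w) :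
    Good (fun ξ => c * w ξ) := by
  have key : ∀ x : ℝ, (∫ ξ : ℝ, Real.cos (x * ξ) * (c * w ξ))
      = c * ∫ ξ : ℝ, Real.cos (x * ξ) * w ξ := by
    intro x
    rw [← integral_const_mul]
    congr 1; funext ξ; ring
  refine ⟨h.integrable.const_mul c, ?_, ?_⟩
  · intro x; rw [key]; exact mul_nonneg hc (h.nonneg x)
  · intro u x hux; rw [key, key]; exact mul_le_mul_of_nonneg_left (h.mono u x hux) hc

/-- Dominated pointwise limits of good functions are good. -/
lemma good_lim {f : ℕ → ℝ → ℝ} {w W : ℝ → ℝ} (hf : ∀ n, Good (f n))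
    (hW : Integrable W) (hb : ∀ n ξ, |f n ξ| ≤ W ξ)
    (hconv : ∀ ξ, Tendsto (fun n => f n ξ) atTop (nhds (w ξ))) : Good w := by
  have hmeas : ∀ n, AEStronglyMeasurable (f n) volume := fun n => (hf n).integrable.1
  have hwm : AEStronglyMeasurable w volume :=
    aestronglyMeasurable_of_tendsto_ae atTop hmeas (Filter.Eventually.of_forall hconv)
  have hwb : ∀ ξ, |w ξ| ≤ W ξ := fun ξ =>
    le_of_tendsto ((hconv ξ).abs) (Filter.Eventually.of_forall fun n => hb n ξ)
  have hwint : Integrable w :=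
    Integrable.mono' hW hwm (Filter.Eventually.of_forall (by simpa [Real.norm_eq_abs] using hwb))
  have key : ∀ x : ℝ, Tendsto (fun n => ∫ ξ : ℝ, Real.cos (x * ξ) * f n ξ) atTop
      (nhds (∫ ξ : ℝ, Real.cos (x * ξ) * w ξ)) := by
    intro x
    refine tendsto_integral_of_dominated_convergence W
      (fun n => (integrable_cos_mul (hf n).integrable x).1) hW
      (fun n => Filter.Eventually.of_forall fun ξ => ?_)
      (Filter.Eventually.of_forall fun ξ => (hconv ξ).const_mul _)
    rw [Real.norm_eq_abs, abs_mul]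
    calc |Real.cos (x * ξ)| * |f n ξ| ≤ 1 * |f n ξ| :=
          mul_le_mul_of_nonneg_right (Real.abs_cos_le_one _) (abs_nonneg _)
      _ = |f n ξ| := one_mul _
      _ ≤ W ξ := hb n ξ
  refine ⟨hwint, fun x => ge_of_tendsto (key x)
      (Filter.Eventually.of_forall fun n => (hf n).nonneg x),
    fun u x hux => le_of_tendsto_of_tendsto (key x) (key u)
      (Filter.Eventually.of_forall fun n => (hf n).mono u x hux)⟩

/-- Finite nonnegative mixtures of (positive-exponent) Gaussians, as lists. -/
def IsGM (w : ℝ → ℝ) : Prop :=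
  ∃ l : List (ℝ × ℝ), (∀ p ∈ l, 0 ≤ p.1 ∧ 0 < p.2) ∧
    ∀ ξ : ℝ, w ξ = (l.map fun p => p.1 * Real.exp (-p.2 * ξ ^ 2)).sum

lemma isGM_zero : IsGM (fun _ => 0) := ⟨[], by simp, by simp⟩

lemma isGM_single {c a : ℝ} (hc : 0 ≤ c) (ha : 0 < a) :
    IsGM (fun ξ => c * Real.exp (-a * ξ ^ 2)) := ⟨[(c, a)], by simp [hc, ha], by simp⟩

lemma IsGM.good {w : ℝ → ℝ} (h : IsGM w) : Good w := by
  obtain ⟨l, hl, hw⟩ := h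
  have : Good (fun ξ => (l.map fun p => p.1 * Real.exp (-p.2 * ξ ^ 2)).sum) := by
    clear hw
    induction l with
    | nil => simpa using good_zero
    | cons p l ih =>
      simp only [List.map_cons, List.sum_cons]
      exact Good.add (Good.const_mul (hl p List.mem_cons_self).1
          (good_gaussian (hl p List.mem_cons_self).2))
        (ih fun q hq => hl q (List.mem_cons_of_mem _ hq))
  have heq : w = fun ξ => (l.map fun p => p.1 * Real.exp (-p.2 * ξ ^ 2)).sum := funext hw
  rw [heq]; exact this

lemma IsGM.add {w₁ w₂ : ℝ → ℝ} (h₁ : IsGM w₁) (h₂ : IsGM w₂) :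
    IsGM (fun ξ => w₁ ξ + w₂ ξ) := by
  obtain ⟨l₁, hl₁, hw₁⟩ := h₁
  obtain ⟨l₂, hl₂, hw₂⟩ := h₂
  refine ⟨l₁ ++ l₂, fun p hp => ?_, fun ξ => ?_⟩
  · rcases List.mem_append.1 hp with h | h
    exacts [hl₁ p h, hl₂ p h]
  · simp only [List.map_append, List.sum_append]
    rw [hw₁, hw₂]

lemma IsGM.const_mul {w : ℝ → ℝ} {c : ℝ} (hc : 0 ≤ c) (h : IsGM w) :
    IsGM (fun ξ => c * w ξ) := by
  obtain ⟨l, hl, hw⟩ := h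
  refine ⟨l.map fun p => (c * p.1, p.2), fun p hp => ?_, fun ξ => ?_⟩
  · obtain ⟨q, hq, rfl⟩ := List.mem_map.1 hp
    exact ⟨mul_nonneg hc (hl q hq).1, (hl q hq).2⟩
  · beta_reduce
    rw [hw ξ]
    clear hw hl
    induction l with
    | nil => simp
    | cons p l ih => simp only [List.map_cons, List.sum_cons, mul_add, ih]; ring_nf

lemma IsGM.gauss_mul {w : ℝ → ℝ} {c a : ℝ} (hc : 0 ≤ c) (ha : 0 < a) (h : IsGM w) :
    IsGM (fun ξ => (c * Real.exp (-a * ξ ^ 2)) * w ξ) := by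
  obtain ⟨l, hl, hw⟩ := h
  refine ⟨l.map fun p => (c * p.1, a + p.2), fun p hp => ?_, fun ξ => ?_⟩
  · obtain ⟨q, hq, rfl⟩ := List.mem_map.1 hp
    exact ⟨mul_nonneg hc (hl q hq).1, add_pos ha (hl q hq).2⟩
  · beta_reduce
    rw [hw ξ]
    clear hw hl
    induction l with
    | nil => simp
    | cons p l ih =>
      simp only [List.map_cons, List.sum_cons, mul_add, ih]
      congr 1
      rw [show -(a + p.2) * ξ ^ 2 = -a * ξ ^ 2 + -p.2 * ξ ^ 2 by ring, Real.exp_add]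
      ring

lemma IsGM.mul {w₁ w₂ : ℝ → ℝ} (h₁ : IsGM w₁) (h₂ : IsGM w₂) :
    IsGM (fun ξ => w₁ ξ * w₂ ξ) := by
  obtain ⟨l, hl, hw⟩ := h₁
  have : IsGM (fun ξ => (l.map fun p => p.1 * Real.exp (-p.2 * ξ ^ 2)).sum * w₂ ξ) := by
    clear hw
    induction l with
    | nil => simpa using isGM_zero
    | cons p l ih =>
      have h1 : IsGM (fun ξ => (p.1 * Real.exp (-p.2 * ξ ^ 2)) * w₂ ξ) :=
        h₂.gauss_mul (hl p List.mem_cons_self).1 (hl p List.mem_cons_self).2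
      have h2 := ih fun q hq => hl q (List.mem_cons_of_mem _ hq)
      have := h1.add h2
      refine Exists.imp (fun l' hl' => ⟨hl'.1, fun ξ => ?_⟩) this
      rw [← hl'.2 ξ]
      beta_reduce
      simp only [List.map_cons, List.sum_cons]; ring
  have heq : (fun ξ => w₁ ξ * w₂ ξ)
      = fun ξ => (l.map fun p => p.1 * Real.exp (-p.2 * ξ ^ 2)).sum * w₂ ξ :=
    funext fun ξ => by rw [hw ξ]
  rw [heq]; exact this

lemma isGM_finset_sum {ι : Type*} (F : Finset ι) (g : ι → ℝ → ℝ)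
    (hg : ∀ i, IsGM (g i)) : IsGM (fun ξ => ∑ i ∈ F, g i ξ) := by
  classical
  induction F using Finset.induction_on with
  | empty => simpa using isGM_zero
  | @insert a F hnotmem ih =>
    have := (hg a).add ih
    refine Exists.imp (fun l' hl' => ⟨hl'.1, fun ξ => ?_⟩) this
    rw [← hl'.2 ξ]
    beta_reduce
    rw [Finset.sum_insert hnotmem]

lemma isGM_gauss_mul_pow {h : ℝ → ℝ} (hGM : IsGM h) {σ : ℝ} (hσ : 0 < σ) (n : ℕ) :
    IsGM (fun ξ => Real.exp (-σ * ξ ^ 2) * (h ξ) ^ n) := by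
  induction n with
  | zero =>
    have := isGM_single (le_of_lt one_pos) hσ
    refine Exists.imp (fun l' hl' => ⟨hl'.1, fun ξ => ?_⟩) this
    rw [← hl'.2 ξ]
    beta_reduce
    ring
  | succ n ih =>
    have := ih.mul hGM
    refine Exists.imp (fun l' hl' => ⟨hl'.1, fun ξ => ?_⟩) this
    rw [← hl'.2 ξ]
    beta_reduce
    ring

/-- Key step: `exp(-σξ² - ∑ᵢ wᵢ(1 - exp(-sᵢξ²)))` is good (a dominated limit of
nonnegative Gaussian mixtures, via the exponential series). -/
lemma good_cp {ι : Type*} {σ : ℝ} (hσ : 0 < σ) (F : Finset ι) (w s : ι → ℝ)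
    (hw : ∀ i, 0 ≤ w i) (hs : ∀ i, 0 < s i) :
    Good (fun ξ => Real.exp (-σ * ξ ^ 2 - ∑ i ∈ F, w i * (1 - Real.exp (-(s i) * ξ ^ 2)))) := by
  set h : ℝ → ℝ := fun ξ => ∑ i ∈ F, w i * Real.exp (-(s i) * ξ ^ 2) with hh
  set M : ℝ := ∑ i ∈ F, w i with hM
  have hGM : IsGM h := isGM_finset_sum F _ (fun i => isGM_single (hw i) (hs i))
  have hnn : ∀ ξ, 0 ≤ h ξ :=
    fun ξ => Finset.sum_nonneg fun i _ => mul_nonneg (hw i) (Real.exp_pos _).le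
  have hle : ∀ ξ, h ξ ≤ M := by
    intro ξ
    refine Finset.sum_le_sum fun i _ => ?_
    calc w i * Real.exp (-(s i) * ξ ^ 2) ≤ w i * 1 := by
          refine mul_le_mul_of_nonneg_left ?_ (hw i)
          refine Real.exp_le_one_iff.2 ?_
          nlinarith [sq_nonneg ξ, hs i]
      _ = w i := mul_one _
  -- partial sums of the exponential series
  have hsummable : ∀ ξ, Summable fun n : ℕ => (h ξ) ^ n / n.factorial :=
    fun ξ => NormedSpace.expSeries_div_summable (h ξ)
  have hexp_eq : ∀ ξ, (∑' n : ℕ, (h ξ) ^ n / n.factorial) = Real.exp (h ξ) := by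
    intro ξ
    rw [Real.exp_eq_exp_ℝ, NormedSpace.exp_eq_tsum_div]
  have hgood : Good (fun ξ => Real.exp (-σ * ξ ^ 2) * Real.exp (h ξ)) := by
    refine good_lim (f := fun N ξ => ∑ n ∈ Finset.range N,
        Real.exp (-σ * ξ ^ 2) * (h ξ) ^ n / n.factorial)
      (W := fun ξ => Real.exp M * Real.exp (-σ * ξ ^ 2)) (fun N => ?_) ?_ (fun N ξ => ?_)
      (fun ξ => ?_)
    · refine IsGM.good (isGM_finset_sum (Finset.range N) _ (fun n => ?_))
      have := (isGM_gauss_mul_pow hGM hσ n).const_mul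
        (c := ((n.factorial : ℝ))⁻¹) (by positivity)
      refine Exists.imp (fun l' hl' => ⟨hl'.1, fun ξ => ?_⟩) this
      rw [← hl'.2 ξ]
      beta_reduce
      ring
    · exact (integrable_exp_neg_mul_sq hσ).const_mul _
    · have h1 : ∀ n : ℕ, Real.exp (-σ * ξ ^ 2) * (h ξ) ^ n / n.factorial
          = Real.exp (-σ * ξ ^ 2) * ((h ξ) ^ n / n.factorial) := fun n => by ring
      rw [abs_of_nonneg (Finset.sum_nonneg fun n _ => div_nonneg
        (mul_nonneg (Real.exp_pos _).le (pow_nonneg (hnn ξ) n)) (Nat.cast_nonneg _))]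
      calc (∑ n ∈ Finset.range N, Real.exp (-σ * ξ ^ 2) * (h ξ) ^ n / n.factorial)
          = Real.exp (-σ * ξ ^ 2) * ∑ n ∈ Finset.range N, (h ξ) ^ n / n.factorial := by
            rw [Finset.mul_sum]; exact Finset.sum_congr rfl fun n _ => h1 n
        _ ≤ Real.exp (-σ * ξ ^ 2) * Real.exp (h ξ) := by
            refine mul_le_mul_of_nonneg_left ?_ (Real.exp_pos _).le
            rw [← hexp_eq ξ]
            exact Summable.sum_le_tsum (Finset.range N) (fun n _ => div_nonneg
              (pow_nonneg (hnn ξ) n) (Nat.cast_nonneg _)) (hsummable ξ)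
        _ ≤ Real.exp M * Real.exp (-σ * ξ ^ 2) := by
            rw [mul_comm]
            exact mul_le_mul_of_nonneg_right (Real.exp_le_exp.2 (hle ξ)) (Real.exp_pos _).le
    · have := ((hsummable ξ).hasSum.tendsto_sum_nat).const_mul (Real.exp (-σ * ξ ^ 2))
      rw [hexp_eq ξ] at this
      refine this.congr fun N => ?_
      rw [Finset.mul_sum]
      exact Finset.sum_congr rfl fun n _ => by ring
  have hfin := Good.const_mul (c := Real.exp (-M)) (Real.exp_pos _).le hgood
  have heq : (fun ξ => Real.exp (-M) * (Real.exp (-σ * ξ ^ 2) * Real.exp (h ξ)))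
      = fun ξ => Real.exp (-σ * ξ ^ 2 - ∑ i ∈ F, w i * (1 - Real.exp (-(s i) * ξ ^ 2))) := by
    funext ξ
    have hsub : ∑ i ∈ F, w i * (1 - Real.exp (-(s i) * ξ ^ 2)) = M - h ξ := by
      rw [hM, hh, ← Finset.sum_sub_distrib]
      exact Finset.sum_congr rfl fun i _ => by ring
    rw [hsub, show -σ * ξ ^ 2 - (M - h ξ) = -M + (-σ * ξ ^ 2) + h ξ by ring,
      Real.exp_add, Real.exp_add]
    ring
  rw [← heq]
  exact hfin

/-! ### A discrete approximation of `u ^ β` -/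

/-- `term r β u k = r^(-kβ) (1 - exp(-r^k u))`. -/
noncomputable def term (r β u : ℝ) (k : ℤ) : ℝ :=
  r ^ (-(k : ℝ) * β) * (1 - Real.exp (-(r ^ (k : ℝ)) * u))

section Tsec

variable {r β u v : ℝ}

lemma term_nonneg (hr : 1 < r) (hu : 0 ≤ u) (k : ℤ) : 0 ≤ term r β u k := by
  have hr0 : (0:ℝ) < r := lt_trans one_pos hr
  refine mul_nonneg (Real.rpow_nonneg hr0.le _) ?_
  have : Real.exp (-(r ^ (k : ℝ)) * u) ≤ 1 := by
    refine Real.exp_le_one_iff.2 ?_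
    have := Real.rpow_pos_of_pos hr0 (k : ℝ)
    nlinarith
  linarith

lemma one_sub_exp_le {y : ℝ} : 1 - Real.exp (-y) ≤ y := by
  have := Real.add_one_le_exp (-y)
  linarith

lemma summable_term (hr : 1 < r) (hβ : 0 < β) (hβ1 : β < 1) (hu : 0 ≤ u) :
    Summable (term r β u) := by
  have hr0 : (0:ℝ) < r := lt_trans one_pos hr
  apply Summable.of_nat_of_neg
  · -- nonnegative indices: bounded by geometric `(r^(-β))^n`
    refine Summable.of_nonneg_of_le (fun n => term_nonneg hr hu _) (fun n => ?_)
      (summable_geometric_of_lt_one (Real.rpow_nonneg hr0.le _)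
        (Real.rpow_lt_one_of_one_lt_of_neg hr (neg_neg_iff_pos.2 hβ)))
    have h1 : term r β u (n : ℤ) ≤ r ^ (-(n : ℝ) * β) * 1 := by
      refine mul_le_mul_of_nonneg_left ?_ (Real.rpow_nonneg hr0.le _)
      have hpos := Real.exp_pos (-(r ^ ((n:ℤ) : ℝ)) * u)
      push_cast at hpos ⊢
      linarith
    have h2 : r ^ (-(n : ℝ) * β) = (r ^ (-β)) ^ n := by
      rw [← Real.rpow_natCast (r ^ (-β)) n, ← Real.rpow_mul hr0.le]
      ring_nf
    calc term r β u (n : ℤ) ≤ r ^ (-(n : ℝ) * β) * 1 := by push_cast at h1 ⊢; exact h1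
      _ = (r ^ (-β)) ^ n := by rw [mul_one, h2]
  · -- negative indices: bounded by `u * (r^(β-1))^n`
    refine Summable.of_nonneg_of_le (fun n => term_nonneg hr hu _) (fun n => ?_)
      ((summable_geometric_of_lt_one (Real.rpow_nonneg hr0.le _)
        (Real.rpow_lt_one_of_one_lt_of_neg hr (show β - 1 < 0 by linarith))).mul_left u)
    have hcast : ((-(n:ℤ) : ℤ) : ℝ) = -(n : ℝ) := by push_cast; ring
    have hterm : term r β u (-(n:ℤ)) = r ^ ((n : ℝ) * β) * (1 - Real.exp (-(r ^ (-(n : ℝ))) * u)) := by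
      unfold term
      rw [hcast]
      ring_nf
    rw [hterm]
    have hb : 1 - Real.exp (-(r ^ (-(n : ℝ))) * u) ≤ r ^ (-(n : ℝ)) * u := by
      have h := one_sub_exp_le (y := r ^ (-(n : ℝ)) * u)
      rw [← neg_mul] at h
      exact h
    calc r ^ ((n : ℝ) * β) * (1 - Real.exp (-(r ^ (-(n : ℝ))) * u))
        ≤ r ^ ((n : ℝ) * β) * (r ^ (-(n : ℝ)) * u) :=
          mul_le_mul_of_nonneg_left hb (Real.rpow_nonneg hr0.le _)
      _ = u * (r ^ (β - 1)) ^ n := by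
          rw [show r ^ ((n : ℝ) * β) * (r ^ (-(n : ℝ)) * u)
              = u * (r ^ ((n : ℝ) * β) * r ^ (-(n : ℝ))) by ring,
            ← Real.rpow_add hr0, ← Real.rpow_natCast (r ^ (β - 1)) n,
            ← Real.rpow_mul hr0.le]
          congr 1
          ring

/-- `T r β u = ∑_{k ∈ ℤ} r^(-kβ) (1 - exp(-r^k u))`. -/
noncomputable def T (r β u : ℝ) : ℝ := ∑' k : ℤ, term r β u k

lemma T_nonneg (hr : 1 < r) (hu : 0 ≤ u) : 0 ≤ T r β u :=
  tsum_nonneg (term_nonneg hr hu)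

lemma T_mono (hr : 1 < r) (hβ : 0 < β) (hβ1 : β < 1) (hu : 0 ≤ u) (huv : u ≤ v) :
    T r β u ≤ T r β v := by
  have hr0 : (0:ℝ) < r := lt_trans one_pos hr
  refine Summable.tsum_le_tsum (fun k => ?_) (summable_term hr hβ hβ1 hu)
    (summable_term hr hβ hβ1 (le_trans hu huv))
  unfold term
  refine mul_le_mul_of_nonneg_left ?_ (Real.rpow_nonneg hr0.le _)
  have : Real.exp (-(r ^ (k : ℝ)) * v) ≤ Real.exp (-(r ^ (k : ℝ)) * u) := by
    refine Real.exp_le_exp.2 ?_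
    have := Real.rpow_pos_of_pos hr0 (k : ℝ)
    nlinarith
  linarith

lemma T_zero : T r β 0 = 0 := by
  unfold T term
  simp

lemma T_scale (hr : 1 < r) (hβ : 0 < β) (hβ1 : β < 1) (hu : 0 ≤ u) (j : ℤ) :
    T r β (r ^ (j : ℝ) * u) = r ^ ((j : ℝ) * β) * T r β u := by
  have hr0 : (0:ℝ) < r := lt_trans one_pos hr
  have hterm : ∀ k : ℤ, term r β (r ^ (j : ℝ) * u) k
      = r ^ ((j : ℝ) * β) * term r β u (k + j) := by
    intro k
    unfold term
    have e1 : -(r ^ (k : ℝ)) * (r ^ (j : ℝ) * u) = -(r ^ (((k + j : ℤ) : ℝ))) * u := by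
      rw [show ((k + j : ℤ) : ℝ) = (k : ℝ) + (j : ℝ) by push_cast; ring,
        Real.rpow_add hr0]
      ring
    have e2 : r ^ (-(k : ℝ) * β) = r ^ ((j : ℝ) * β) * r ^ (-(((k + j : ℤ)) : ℝ) * β) := by
      rw [← Real.rpow_add hr0]
      congr 1
      push_cast
      ring
    rw [e1, e2]
    ring
  calc T r β (r ^ (j : ℝ) * u)
      = ∑' k : ℤ, r ^ ((j : ℝ) * β) * term r β u (k + j) := tsum_congr hterm
    _ = ∑' k : ℤ, r ^ ((j : ℝ) * β) * term r β u k := by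
        exact (Equiv.addRight j).tsum_eq fun k => r ^ ((j : ℝ) * β) * term r β u k
    _ = r ^ ((j : ℝ) * β) * T r β u := tsum_mul_left

lemma T_one_pos (hr : 1 < r) (hβ : 0 < β) (hβ1 : β < 1) : 0 < T r β 1 := by
  have h0 : term r β 1 0 = 1 - Real.exp (-1) := by
    unfold term
    norm_num
  have hpos : 0 < term r β 1 0 := by
    rw [h0]
    have : Real.exp (-1) < 1 := Real.exp_lt_one_iff.2 (by norm_num)
    linarith
  calc (0:ℝ) < term r β 1 0 := hpos
    _ ≤ T r β 1 := Summable.le_tsum (summable_term hr hβ hβ1 one_pos.le) 0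
        fun j _ => term_nonneg hr one_pos.le j

/-- The normalized sum is close to `u ^ β` for `r` close to `1`. -/
lemma T_approx (hr : 1 < r) (hβ : 0 < β) (hβ1 : β < 1) (hu : 0 < u) :
    |T r β u / T r β 1 - u ^ β| ≤ u ^ β * (r ^ β - 1) := by
  have hr0 : (0:ℝ) < r := lt_trans one_pos hr
  have hT1 : 0 < T r β 1 := T_one_pos hr hβ hβ1
  obtain ⟨j, hj1, hj2⟩ := exists_mem_Ico_zpow hu hr
  have hzp : ∀ m : ℤ, (r : ℝ) ^ m = r ^ ((m : ℝ)) := fun m => (Real.rpow_intCast r m).symm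
  have hrj : (0:ℝ) < r ^ ((j : ℝ)) := Real.rpow_pos_of_pos hr0 _
  have hlow : r ^ ((j : ℝ) * β) * T r β 1 ≤ T r β u := by
    have := T_mono hr hβ hβ1 hrj.le (show r ^ ((j : ℝ)) ≤ u by rw [← hzp]; exact hj1)
    calc r ^ ((j : ℝ) * β) * T r β 1 = T r β (r ^ ((j : ℝ)) * 1) := (T_scale hr hβ hβ1 one_pos.le j).symm
      _ = T r β (r ^ ((j : ℝ))) := by rw [mul_one]
      _ ≤ T r β u := this
  have hhigh : T r β u ≤ r ^ (((j : ℝ) + 1) * β) * T r β 1 := by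
    have h1 : T r β u ≤ T r β (r ^ (((j + 1 : ℤ)) : ℝ)) := by
      refine T_mono hr hβ hβ1 hu.le ?_
      rw [← hzp]
      exact hj2.le
    calc T r β u ≤ T r β (r ^ (((j + 1 : ℤ)) : ℝ) * 1) := by rw [mul_one]; exact h1
      _ = r ^ ((((j + 1 : ℤ)) : ℝ) * β) * T r β 1 := T_scale hr hβ hβ1 one_pos.le (j + 1)
      _ = r ^ (((j : ℝ) + 1) * β) * T r β 1 := by push_cast; ring_nf
  have hql : r ^ ((j : ℝ) * β) ≤ T r β u / T r β 1 := by
    rw [le_div_iff₀ hT1]; exact hlow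
  have hqh : T r β u / T r β 1 ≤ r ^ (((j : ℝ) + 1) * β) := by
    rw [div_le_iff₀ hT1]; exact hhigh
  have hul : r ^ ((j : ℝ) * β) ≤ u ^ β := by
    rw [Real.rpow_mul hr0.le]
    exact Real.rpow_le_rpow (Real.rpow_nonneg hr0.le _) (by rw [← hzp]; exact hj1) hβ.le
  have huh : u ^ β ≤ r ^ (((j : ℝ) + 1) * β) := by
    rw [show ((j : ℝ) + 1) = (((j + 1 : ℤ)) : ℝ) by push_cast; ring, Real.rpow_mul hr0.le]
    exact Real.rpow_le_rpow hu.le (by rw [← hzp]; exact hj2.le) hβ.le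
  have hwidth : r ^ (((j : ℝ) + 1) * β) - r ^ ((j : ℝ) * β) ≤ u ^ β * (r ^ β - 1) := by
    have e : r ^ (((j : ℝ) + 1) * β) = r ^ ((j : ℝ) * β) * r ^ β := by
      rw [← Real.rpow_add hr0]
      ring_nf
    have hr1 : (1:ℝ) ≤ r ^ β := by
      rw [show (1:ℝ) = r ^ (0:ℝ) by rw [Real.rpow_zero]]
      exact Real.rpow_le_rpow_left_iff hr |>.2 hβ.le
    calc r ^ (((j : ℝ) + 1) * β) - r ^ ((j : ℝ) * β)
        = r ^ ((j : ℝ) * β) * (r ^ β - 1) := by rw [e]; ring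
      _ ≤ u ^ β * (r ^ β - 1) := mul_le_mul_of_nonneg_right hul (by linarith)
  rw [abs_sub_le_iff]
  constructor <;> linarith

end Tsec

lemma tendsto_Icc_atTop : Tendsto (fun K : ℕ => Finset.Icc (-(K : ℤ)) (K : ℤ)) atTop atTop := by
  refine tendsto_atTop_finset_of_monotone (fun a b hab => ?_) (fun i => ⟨i.natAbs, ?_⟩)
  · exact Finset.Icc_subset_Icc (neg_le_neg (Int.ofNat_le.2 hab)) (Int.ofNat_le.2 hab)
  · rw [Finset.mem_Icc]
    constructor
    · rw [← Int.abs_eq_natAbs]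
      exact neg_abs_le i
    · rw [← Int.abs_eq_natAbs]
      exact le_abs_self i

/-- Stage 1: `exp(-σξ² - T_r(ξ²)/T_r(1))` is good. -/
lemma good_T {σ r β : ℝ} (hσ : 0 < σ) (hr : 1 < r) (hβ : 0 < β) (hβ1 : β < 1) :
    Good (fun ξ => Real.exp (-σ * ξ ^ 2 - T r β (ξ ^ 2) / T r β 1)) := by
  have hr0 : (0:ℝ) < r := lt_trans one_pos hr
  have hT1 : 0 < T r β 1 := T_one_pos hr hβ hβ1
  refine good_lim (f := fun K ξ => Real.exp (-σ * ξ ^ 2 -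
      ∑ k ∈ Finset.Icc (-(K : ℤ)) (K : ℤ),
        (r ^ (-(k : ℝ) * β) / T r β 1) * (1 - Real.exp (-(r ^ ((k : ℝ))) * ξ ^ 2))))
    (W := fun ξ => Real.exp (-σ * ξ ^ 2)) (fun K => ?_) (integrable_exp_neg_mul_sq hσ)
    (fun K ξ => ?_) (fun ξ => ?_)
  · exact good_cp hσ _ _ _ (fun k => div_nonneg (Real.rpow_nonneg hr0.le _) hT1.le)
      (fun k => Real.rpow_pos_of_pos hr0 _)
  · rw [abs_of_nonneg (Real.exp_pos _).le]
    refine Real.exp_le_exp.2 ?_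
    have : 0 ≤ ∑ k ∈ Finset.Icc (-(K : ℤ)) (K : ℤ),
        (r ^ (-(k : ℝ) * β) / T r β 1) * (1 - Real.exp (-(r ^ ((k : ℝ))) * ξ ^ 2)) := by
      refine Finset.sum_nonneg fun k _ => ?_
      refine mul_nonneg (div_nonneg (Real.rpow_nonneg hr0.le _) hT1.le) ?_
      have : Real.exp (-(r ^ ((k : ℝ))) * ξ ^ 2) ≤ 1 := by
        refine Real.exp_le_one_iff.2 ?_
        have := Real.rpow_pos_of_pos hr0 (k : ℝ)
        nlinarith [sq_nonneg ξ]
      linarith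
    linarith
  · -- convergence of partial sums to the full series
    have hsum : HasSum (term r β (ξ ^ 2)) (T r β (ξ ^ 2)) :=
      (summable_term hr hβ hβ1 (sq_nonneg ξ)).hasSum
    have h1 : Tendsto (fun K : ℕ => ∑ k ∈ Finset.Icc (-(K : ℤ)) (K : ℤ), term r β (ξ ^ 2) k)
        atTop (nhds (T r β (ξ ^ 2))) := hsum.comp tendsto_Icc_atTop
    have h2 : Tendsto (fun K : ℕ => -σ * ξ ^ 2 -
        ∑ k ∈ Finset.Icc (-(K : ℤ)) (K : ℤ),
          (r ^ (-(k : ℝ) * β) / T r β 1) * (1 - Real.exp (-(r ^ ((k : ℝ))) * ξ ^ 2)))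
        atTop (nhds (-σ * ξ ^ 2 - T r β (ξ ^ 2) / T r β 1)) := by
      have h3 : ∀ K : ℕ, ∑ k ∈ Finset.Icc (-(K : ℤ)) (K : ℤ),
          (r ^ (-(k : ℝ) * β) / T r β 1) * (1 - Real.exp (-(r ^ ((k : ℝ))) * ξ ^ 2))
          = (∑ k ∈ Finset.Icc (-(K : ℤ)) (K : ℤ), term r β (ξ ^ 2) k) / T r β 1 := by
        intro K
        rw [Finset.sum_div]
        refine Finset.sum_congr rfl fun k _ => ?_
        unfold term
        ring
      simp only [h3]
      exact tendsto_const_nhds.sub (h1.div_const _)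
    exact (Real.continuous_exp.tendsto _).comp h2

/-- Stage 2: `exp(-σξ² - (ξ²)^β)` is good. -/
lemma good_sigma {σ β : ℝ} (hσ : 0 < σ) (hβ : 0 < β) (hβ1 : β < 1) :
    Good (fun ξ => Real.exp (-σ * ξ ^ 2 - (ξ ^ 2) ^ β)) := by
  set r : ℕ → ℝ := fun m => 1 + ((m : ℝ) + 1)⁻¹ with hrdef
  have hr : ∀ m, 1 < r m := fun m => by
    have : (0:ℝ) < ((m : ℝ) + 1)⁻¹ := by positivity
    simp only [hrdef]
    linarith
  have hrtend : Tendsto r atTop (nhds 1) := by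
    have h0 : Tendsto (fun m : ℕ => ((m : ℝ) + 1)⁻¹) atTop (nhds 0) :=
      tendsto_one_div_add_atTop_nhds_zero_nat.congr fun m => by rw [one_div]
    simpa using h0.const_add (1:ℝ)
  refine good_lim (f := fun m ξ => Real.exp (-σ * ξ ^ 2 - T (r m) β (ξ ^ 2) / T (r m) β 1))
    (W := fun ξ => Real.exp (-σ * ξ ^ 2)) (fun m => good_T hσ (hr m) hβ hβ1)
    (integrable_exp_neg_mul_sq hσ) (fun m ξ => ?_) (fun ξ => ?_)
  · rw [abs_of_nonneg (Real.exp_pos _).le]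
    refine Real.exp_le_exp.2 ?_
    have := div_nonneg (T_nonneg (β := β) (hr m) (sq_nonneg ξ)) (T_one_pos (hr m) hβ hβ1).le
    linarith
  · by_cases hξ : ξ = 0
    · subst hξ
      have hz : ∀ m : ℕ, T (r m) β ((0:ℝ) ^ 2) / T (r m) β 1 = 0 := by
        intro m
        rw [show ((0:ℝ) ^ 2 : ℝ) = 0 by norm_num, T_zero, zero_div]
      have : (fun m : ℕ => Real.exp (-σ * (0:ℝ) ^ 2 - T (r m) β ((0:ℝ) ^ 2) / T (r m) β 1))
          = fun _ : ℕ => Real.exp (-σ * (0:ℝ) ^ 2 - 0) := by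
        funext m; rw [hz m]
      rw [this, show ((0:ℝ) ^ 2) ^ β = 0 by
        rw [show ((0:ℝ) ^ 2 : ℝ) = 0 by norm_num, Real.zero_rpow hβ.ne']]
      exact tendsto_const_nhds
    · have hu : 0 < ξ ^ 2 := by positivity
      have hrb : Tendsto (fun m => (r m) ^ β) atTop (nhds 1) := by
        have hc : ContinuousAt (fun y : ℝ => y ^ β) 1 :=
          Real.continuousAt_rpow_const 1 β (Or.inl one_ne_zero)
        have := hc.tendsto.comp hrtend
        simpa [Real.one_rpow, Function.comp_def] using this
      have hb : Tendsto (fun m => (ξ ^ 2) ^ β * ((r m) ^ β - 1)) atTop (nhds 0) := by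
        have := (hrb.sub_const 1).const_mul ((ξ ^ 2) ^ β)
        simpa using this
      have hdiff : Tendsto (fun m => T (r m) β (ξ ^ 2) / T (r m) β 1 - (ξ ^ 2) ^ β)
          atTop (nhds 0) := by
        refine squeeze_zero_norm (fun m => ?_) hb
        rw [Real.norm_eq_abs]
        exact T_approx (hr m) hβ hβ1 hu
      have hTT : Tendsto (fun m => T (r m) β (ξ ^ 2) / T (r m) β 1)
          atTop (nhds ((ξ ^ 2) ^ β)) := by
        have := hdiff.add_const ((ξ ^ 2) ^ β)
        simpa using this
      exact (Real.continuous_exp.tendsto _).comp (tendsto_const_nhds.sub hTT)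

end StableAux



namespace StableAux

open Real Filter Set

/-- Integrability of `exp(-|ξ|^α)` for `α > 0`. -/
lemma integrable_exp_neg_abs_rpow {α : ℝ} (hα : 0 < α) :
    Integrable (fun ξ : ℝ => Real.exp (-|ξ| ^ α)) := by
  have h0 : IntegrableOn (fun y : ℝ => y ^ (1 / α - 1) * Real.exp (-y)) (Ioi 0) := by
    have := integrableOn_rpow_mul_exp_neg_mul_rpow (p := 1) (s := 1 / α - 1) (b := 1)
      (by simp; positivity) one_pos one_pos
    refine this.congr_fun (fun y hy => ?_) measurableSet_Ioi
    beta_reduce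
    rw [Real.rpow_one]
    norm_num
  have h1 : IntegrableOn (fun x : ℝ => Real.exp (-x ^ α)) (Ioi 0) := by
    have h2 := (integrableOn_Ioi_comp_rpow_iff' (fun y : ℝ => y ^ (1 / α - 1) * Real.exp (-y))
      (p := α) hα.ne').2 h0
    refine h2.congr_fun (fun x hx => ?_) measurableSet_Ioi
    have hx0 : (0:ℝ) < x := hx
    have e1 : (x ^ α) ^ (1 / α - 1) = x ^ (1 - α) := by
      rw [← Real.rpow_mul hx0.le]
      congr 1
      field_simp
    beta_reduce
    rw [smul_eq_mul, e1, show x ^ (α - 1) * (x ^ (1 - α) * Real.exp (-x ^ α))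
        = (x ^ (α - 1) * x ^ (1 - α)) * Real.exp (-x ^ α) by ring,
      ← Real.rpow_add hx0, show α - 1 + (1 - α) = 0 by ring, Real.rpow_zero, one_mul]
  have h2 : IntegrableOn (fun x : ℝ => Real.exp (-|x| ^ α)) (Ioi 0) := by
    refine h1.congr_fun (fun x hx => ?_) measurableSet_Ioi
    rw [abs_of_pos hx]
  have h3 : IntegrableOn (fun x : ℝ => Real.exp (-|x| ^ α)) (Iio 0) := by
    rw [← (Measure.measurePreserving_neg (volume : Measure ℝ)).integrableOn_comp_preimage
      (Homeomorph.neg ℝ).measurableEmbedding]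
    simp only [Function.comp_def, neg_preimage, neg_Iio, neg_zero, abs_neg]
    exact h2
  rw [← integrableOn_univ, ← Iio_union_Ici (a := (0:ℝ)), integrableOn_union,
    integrableOn_Ici_iff_integrableOn_Ioi]
  exact ⟨h3, h2⟩

lemma integrable_w {α : ℝ} (hα : 0 < α) :
    Integrable (fun ξ : ℝ => Real.exp (-1 * |ξ| ^ α)) := by
  refine (integrable_exp_neg_abs_rpow hα).congr (Filter.Eventually.of_forall fun ξ => ?_)
  beta_reduce
  rw [neg_one_mul]

/-- Stage 3: removing the Gaussian regularization. -/
lemma good_beta {β : ℝ} (hβ : 0 < β) (hβ1 : β < 1) :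
    Good (fun ξ => Real.exp (-(ξ ^ 2) ^ β)) := by
  have hsq : ∀ ξ : ℝ, (ξ ^ 2 : ℝ) ^ β = |ξ| ^ (2 * β) := by
    intro ξ
    rw [← sq_abs ξ, ← Real.rpow_natCast |ξ| 2, ← Real.rpow_mul (abs_nonneg ξ)]
    norm_num
  have hint : Integrable (fun ξ : ℝ => Real.exp (-(ξ ^ 2) ^ β)) := by
    refine (integrable_exp_neg_abs_rpow (α := 2 * β) (by linarith)).congr
      (Filter.Eventually.of_forall fun ξ => ?_)
    beta_reduce
    rw [hsq ξ]
  refine good_lim (f := fun m ξ => Real.exp (-(((m : ℝ) + 1)⁻¹) * ξ ^ 2 - (ξ ^ 2) ^ β))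
    (W := fun ξ => Real.exp (-(ξ ^ 2) ^ β))
    (fun m => good_sigma (by positivity) hβ hβ1) hint (fun m ξ => ?_) (fun ξ => ?_)
  · rw [abs_of_nonneg (Real.exp_pos _).le]
    refine Real.exp_le_exp.2 ?_
    have : (0:ℝ) ≤ ((m : ℝ) + 1)⁻¹ * ξ ^ 2 := by positivity
    linarith
  · have h0 : Tendsto (fun m : ℕ => ((m : ℝ) + 1)⁻¹) atTop (nhds 0) :=
      tendsto_one_div_add_atTop_nhds_zero_nat.congr fun m => by rw [one_div]
    refine (Real.continuous_exp.tendsto _).comp ?_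
    have := ((h0.neg).mul_const (ξ ^ 2)).sub_const ((ξ ^ 2) ^ β)
    simpa using this

lemma good_alpha {α : ℝ} (hα : 0 < α) (hα2 : α ≤ 2) :
    Good (fun ξ => Real.exp (-1 * |ξ| ^ α)) := by
  rcases eq_or_lt_of_le hα2 with h2 | h2
  · subst h2
    have habs : ∀ ξ : ℝ, |ξ| ^ (2:ℝ) = ξ ^ 2 := fun ξ => by
      rw [show (2:ℝ) = ((2:ℕ) : ℝ) by norm_num, Real.rpow_natCast, sq_abs]
    have heq : (fun ξ : ℝ => Real.exp (-1 * |ξ| ^ (2:ℝ)))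
        = fun ξ => Real.exp (-1 * ξ ^ 2) := funext fun ξ => by rw [habs ξ]
    rw [heq]
    exact good_gaussian one_pos
  · have hβ : 0 < α / 2 := by positivity
    have hβ1 : α / 2 < 1 := by linarith
    have hg := good_beta hβ hβ1
    have heq : (fun ξ : ℝ => Real.exp (-(ξ ^ 2) ^ (α / 2)))
        = fun ξ => Real.exp (-1 * |ξ| ^ α) := by
      funext ξ
      rw [neg_one_mul]
      congr 1
      congr 1
      rw [← sq_abs ξ, ← Real.rpow_natCast |ξ| 2, ← Real.rpow_mul (abs_nonneg ξ)]
      norm_num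
      congr 1
      ring
    rw [← heq]
    exact hg

lemma kernel_scale {α t : ℝ} (hα : 0 < α) (ht : 0 < t) (x : ℝ) :
    stableKernel α t x = t ^ (-(1/α)) * stableKernel α 1 (t ^ (-(1/α)) * x) := by
  have hc : (0:ℝ) < t ^ (1/α) := Real.rpow_pos_of_pos ht _
  have hti : (0:ℝ) < t ^ (-(1/α)) := Real.rpow_pos_of_pos ht _
  have hmul : t ^ (-(1/α)) * t ^ (1/α) = 1 := by
    rw [← Real.rpow_add ht]; norm_num
  have key : ∀ ξ : ℝ, Real.cos (x * ξ) * Real.exp (-t * |ξ| ^ α)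
      = (fun η => Real.cos ((t ^ (-(1/α)) * x) * η) * Real.exp (-1 * |η| ^ α))
        (t ^ (1/α) * ξ) := by
    intro ξ
    beta_reduce
    congr 1
    · congr 1
      calc x * ξ = (t ^ (-(1/α)) * t ^ (1/α)) * (x * ξ) := by rw [hmul, one_mul]
        _ = t ^ (-(1/α)) * x * (t ^ (1/α) * ξ) := by ring
    · congr 1
      rw [abs_mul, abs_of_pos hc, Real.mul_rpow hc.le (abs_nonneg ξ),
        ← Real.rpow_mul ht.le, one_div_mul_cancel hα.ne', Real.rpow_one]
      ring
  unfold stableKernel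
  rw [show (∫ ξ : ℝ, Real.cos (x * ξ) * Real.exp (-t * |ξ| ^ α))
      = ∫ ξ : ℝ, (fun η => Real.cos ((t ^ (-(1/α)) * x) * η) * Real.exp (-1 * |η| ^ α))
        (t ^ (1/α) * ξ) from integral_congr_ae (Filter.Eventually.of_forall key),
    MeasureTheory.Measure.integral_comp_mul_left
      (fun η => Real.cos ((t ^ (-(1/α)) * x) * η) * Real.exp (-1 * |η| ^ α)) (t ^ (1/α))]
  rw [smul_eq_mul, abs_of_pos (inv_pos.2 hc),
    show (t ^ (1/α))⁻¹ = t ^ (-(1/α)) from (Real.rpow_neg ht.le _).symm]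
  ring

lemma kernel_cont {α : ℝ} (hα : 0 < α) : Continuous (fun v => stableKernel α 1 v) := by
  unfold stableKernel
  refine continuous_const.mul ?_
  have habs : Continuous fun ξ : ℝ => |ξ| ^ α := continuous_iff_continuousAt.2 fun ξ =>
    (Real.continuousAt_rpow_const |ξ| α (Or.inr hα.le)).comp continuous_abs.continuousAt
  refine continuous_of_dominated (bound := fun ξ => Real.exp (-1 * |ξ| ^ α))
    (fun v => ?_) (fun v => Filter.Eventually.of_forall fun ξ => ?_) (integrable_w hα)
    (Filter.Eventually.of_forall fun ξ => ?_)
  · refine Continuous.aestronglyMeasurable ?_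
    exact (Real.continuous_cos.comp (continuous_const.mul continuous_id)).mul
      (Real.continuous_exp.comp (continuous_const.mul habs))
  · rw [Real.norm_eq_abs, abs_mul, abs_of_pos (Real.exp_pos _)]
    calc |Real.cos (v * ξ)| * Real.exp (-1 * |ξ| ^ α)
        ≤ 1 * Real.exp (-1 * |ξ| ^ α) :=
          mul_le_mul_of_nonneg_right (Real.abs_cos_le_one _) (Real.exp_pos _).le
      _ = Real.exp (-1 * |ξ| ^ α) := one_mul _
  · exact (Real.continuous_cos.comp (continuous_id.mul continuous_const)).mul continuous_const

lemma kernel_le {α : ℝ} (hα : 0 < α) (v : ℝ) :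
    |stableKernel α 1 v| ≤ (2 * π)⁻¹ * ∫ ξ : ℝ, Real.exp (-1 * |ξ| ^ α) := by
  unfold stableKernel
  rw [abs_mul, abs_of_nonneg (by positivity : (0:ℝ) ≤ (2 * π)⁻¹)]
  refine mul_le_mul_of_nonneg_left ?_ (by positivity)
  rw [← Real.norm_eq_abs]
  refine norm_integral_le_of_norm_le (integrable_w hα) (Filter.Eventually.of_forall fun ξ => ?_)
  rw [Real.norm_eq_abs, abs_mul, abs_of_pos (Real.exp_pos _)]
  calc |Real.cos (v * ξ)| * Real.exp (-1 * |ξ| ^ α)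
      ≤ 1 * Real.exp (-1 * |ξ| ^ α) :=
        mul_le_mul_of_nonneg_right (Real.abs_cos_le_one _) (Real.exp_pos _).le
    _ = Real.exp (-1 * |ξ| ^ α) := one_mul _

end StableAux

theorem stable_kernel_ball_lower_bound (α : ℝ) (hα : α ∈ Set.Ioc (0:ℝ) 2)
    (μ : Measure ℝ) [IsFiniteMeasure μ] (t : ℝ) (ht : 0 < t) (x : ℝ) :
    stableKernel α 1 1 * t ^ (-(1 / α)) * (μ (Metric.ball x (t ^ (1 / α)))).toReal ≤
      ∫ y : ℝ, stableKernel α t (x - y) ∂μ := by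
  obtain ⟨hα0, hα2⟩ := hα
  have hgood := StableAux.good_alpha hα0 hα2
  have hR : (0:ℝ) < t ^ (1/α) := Real.rpow_pos_of_pos ht _
  have hti : (0:ℝ) < t ^ (-(1/α)) := Real.rpow_pos_of_pos ht _
  have hmul : t ^ (-(1/α)) * t ^ (1/α) = 1 := by
    rw [← Real.rpow_add ht]; norm_num
  have h2π : (0:ℝ) ≤ (2 * Real.pi)⁻¹ := by positivity
  have hker1 : ∀ z : ℝ, 0 ≤ stableKernel α 1 z := by
    intro z
    unfold stableKernel
    exact mul_nonneg h2π (hgood.nonneg z)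
  have hker2 : ∀ z : ℝ, |z| ≤ 1 → stableKernel α 1 1 ≤ stableKernel α 1 z := by
    intro z hz
    unfold stableKernel
    exact mul_le_mul_of_nonneg_left (hgood.mono z 1 (by simpa using hz)) h2π
  have hnn : ∀ y : ℝ, 0 ≤ stableKernel α t (x - y) := by
    intro y
    rw [StableAux.kernel_scale hα0 ht]
    exact mul_nonneg hti.le (hker1 _)
  have hlow : ∀ y ∈ Metric.ball x (t ^ (1/α)),
      stableKernel α 1 1 * t ^ (-(1/α)) ≤ stableKernel α t (x - y) := by
    intro y hy
    rw [StableAux.kernel_scale hα0 ht]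
    have hdist : |x - y| < t ^ (1/α) := by
      rw [Metric.mem_ball, Real.dist_eq] at hy
      rw [abs_sub_comm]
      exact hy
    have habs : |t ^ (-(1/α)) * (x - y)| ≤ 1 := by
      rw [abs_mul, abs_of_pos hti]
      calc t ^ (-(1/α)) * |x - y| ≤ t ^ (-(1/α)) * t ^ (1/α) :=
            mul_le_mul_of_nonneg_left hdist.le hti.le
        _ = 1 := hmul
    calc stableKernel α 1 1 * t ^ (-(1/α)) = t ^ (-(1/α)) * stableKernel α 1 1 := mul_comm _ _
      _ ≤ t ^ (-(1/α)) * stableKernel α 1 (t ^ (-(1/α)) * (x - y)) :=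
          mul_le_mul_of_nonneg_left (hker2 _ habs) hti.le
  have hcont : Continuous fun y => stableKernel α t (x - y) := by
    have heq : (fun y => stableKernel α t (x - y))
        = fun y => t ^ (-(1/α)) * stableKernel α 1 (t ^ (-(1/α)) * (x - y)) :=
      funext fun y => StableAux.kernel_scale hα0 ht _
    rw [heq]
    exact continuous_const.mul ((StableAux.kernel_cont hα0).comp
      (continuous_const.mul (continuous_const.sub continuous_id)))
  have hintf : Integrable (fun y => stableKernel α t (x - y)) μ := by
    refine Integrable.mono' (integrable_const (t ^ (-(1/α)) *
      ((2 * Real.pi)⁻¹ * ∫ ξ : ℝ, Real.exp (-1 * |ξ| ^ α))))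
      hcont.aestronglyMeasurable (Filter.Eventually.of_forall fun y => ?_)
    rw [Real.norm_eq_abs, StableAux.kernel_scale hα0 ht, abs_mul, abs_of_pos hti]
    exact mul_le_mul_of_nonneg_left (StableAux.kernel_le hα0 _) hti.le
  have hind : Integrable ((Metric.ball x (t ^ (1/α))).indicator
      fun _ => stableKernel α 1 1 * t ^ (-(1/α))) μ :=
    (integrable_const _).indicator measurableSet_ball
  have hptwise : ∀ y : ℝ, ((Metric.ball x (t ^ (1/α))).indicator
      fun _ => stableKernel α 1 1 * t ^ (-(1/α))) y ≤ stableKernel α t (x - y) := by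
    intro y
    by_cases hy : y ∈ Metric.ball x (t ^ (1/α))
    · rw [Set.indicator_of_mem hy]
      exact hlow y hy
    · rw [Set.indicator_of_notMem hy]
      exact hnn y
  have hci := integral_indicator_const (μ := μ)
    (stableKernel α 1 1 * t ^ (-(1/α))) (measurableSet_ball (x := x) (ε := t ^ (1/α)))
  calc stableKernel α 1 1 * t ^ (-(1/α)) * (μ (Metric.ball x (t ^ (1/α)))).toReal
      = ∫ y, ((Metric.ball x (t ^ (1/α))).indicator
          fun _ => stableKernel α 1 1 * t ^ (-(1/α))) y ∂μ := by
        rw [hci, smul_eq_mul, measureReal_def]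
        ring
    _ ≤ ∫ y, stableKernel α t (x - y) ∂μ := integral_mono hind hintf hptwise
end

section
/- For all a, b, q, δ > 0 the following holds: the series S_k := Σ_{n=1}^∞ ((a n^{−q}) / k)^{b k n^{δ}} converges for all sufficiently large k > 0, and lim_{k→∞} S_k = 0. -/
theorem series_tendsto_zero (a b q δ : ℝ) (ha : 0 < a) (hb : 0 < b)
    (hq : 0 < q) (hδ : 0 < δ) :
    (∃ k₀ : ℝ, 0 < k₀ ∧ ∀ k : ℝ, k₀ ≤ k →
      Summable (fun n : ℕ =>
        (a * ((n : ℝ) + 1) ^ (-q) / k) ^ (b * k * ((n : ℝ) + 1) ^ δ))) ∧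
    Filter.Tendsto
      (fun k : ℝ => ∑' n : ℕ,
        (a * ((n : ℝ) + 1) ^ (-q) / k) ^ (b * k * ((n : ℝ) + 1) ^ δ))
      Filter.atTop (nhds 0) := by
  set k₀ : ℝ := max (2 * a) (2 / (b * q)) with hk₀def
  have hbq : 0 < b * q := mul_pos hb hq
  have hk₀pos : 0 < k₀ := lt_max_of_lt_left (by linarith)
  -- summability of the comparison series
  have hg : Summable (fun n : ℕ => ((n : ℝ) + 1) ^ (-(2:ℝ))) := by
    have h1 : Summable (fun n : ℕ => (n : ℝ) ^ (-(2:ℝ))) :=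
      Real.summable_nat_rpow.2 (by norm_num)
    have h2 := (summable_nat_add_iff 1).2 h1
    refine h2.congr fun n => ?_
    push_cast
    ring_nf
  -- termwise bound for k ≥ k₀
  have key : ∀ k : ℝ, k₀ ≤ k → ∀ n : ℕ,
      (a * ((n : ℝ) + 1) ^ (-q) / k) ^ (b * k * ((n : ℝ) + 1) ^ δ)
        ≤ (1/2 : ℝ) ^ (b * k) * ((n : ℝ) + 1) ^ (-(2:ℝ)) := by
    intro k hk n
    have hkpos : 0 < k := lt_of_lt_of_le hk₀pos hk
    have hk2a : 2 * a ≤ k := le_trans (le_max_left _ _) hk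
    have hkq : 2 / (b * q) ≤ k := le_trans (le_max_right _ _) hk
    have hbqk : 2 ≤ b * q * k := by
      rw [div_le_iff₀ hbq] at hkq; linarith
    set m : ℝ := (n : ℝ) + 1 with hm
    have hm1 : (1:ℝ) ≤ m := by
      have : (0:ℝ) ≤ (n:ℝ) := n.cast_nonneg
      simp only [hm]; linarith
    have hm0 : (0:ℝ) < m := by positivity
    have hmq : m ^ (-q) ≤ 1 :=
      Real.rpow_le_one_of_one_le_of_nonpos hm1 (by linarith)
    have hmq0 : 0 < m ^ (-q) := Real.rpow_pos_of_pos hm0 _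
    set x : ℝ := a * m ^ (-q) / k with hx
    have hx0 : 0 < x := by positivity
    have hxhalf : x ≤ 1/2 := by
      have : a * m ^ (-q) ≤ a := by nlinarith
      rw [hx, div_le_iff₀ hkpos]
      nlinarith
    have hmδ : (1:ℝ) ≤ m ^ δ := Real.one_le_rpow hm1 hδ.le
    have hexp : b * k ≤ b * k * m ^ δ := by nlinarith [mul_pos hb hkpos]
    have step1 : x ^ (b * k * m ^ δ) ≤ x ^ (b * k) :=
      Real.rpow_le_rpow_of_exponent_ge hx0 (by linarith) hexp
    have step2 : x ^ (b * k) = (a / k) ^ (b * k) * (m ^ (-q)) ^ (b * k) := by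
      rw [hx, show a * m ^ (-q) / k = (a / k) * m ^ (-q) by ring,
        Real.mul_rpow (by positivity) (by positivity)]
    have step3 : (a / k) ^ (b * k) ≤ (1/2 : ℝ) ^ (b * k) := by
      apply Real.rpow_le_rpow (by positivity) _ (by positivity)
      rw [div_le_iff₀ hkpos]; nlinarith
    have step4 : (m ^ (-q)) ^ (b * k) = m ^ (-q * (b * k)) := by
      rw [← Real.rpow_mul hm0.le]
    have step5 : m ^ (-q * (b * k)) ≤ m ^ (-(2:ℝ)) := by
      apply Real.rpow_le_rpow_of_exponent_le hm1
      nlinarith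
    calc x ^ (b * k * m ^ δ) ≤ x ^ (b * k) := step1
      _ = (a / k) ^ (b * k) * (m ^ (-q)) ^ (b * k) := step2
      _ ≤ (1/2 : ℝ) ^ (b * k) * (m ^ (-(2:ℝ))) := by
          rw [step4]
          exact mul_le_mul step3 step5 (by positivity) (by positivity)
  have hsum : ∀ k : ℝ, k₀ ≤ k →
      Summable (fun n : ℕ =>
        (a * ((n : ℝ) + 1) ^ (-q) / k) ^ (b * k * ((n : ℝ) + 1) ^ δ)) := by
    intro k hk
    have hkpos : 0 < k := lt_of_lt_of_le hk₀pos hk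
    refine Summable.of_nonneg_of_le (fun n => ?_) (key k hk) (hg.mul_left _)
    have : (0:ℝ) < a * ((n : ℝ) + 1) ^ (-q) / k := by positivity
    exact (Real.rpow_pos_of_pos this _).le
  refine ⟨⟨k₀, hk₀pos, hsum⟩, ?_⟩
  -- squeeze to 0
  have hF : Filter.Tendsto (fun k : ℝ => (1/2 : ℝ) ^ (b * k) *
      ∑' n : ℕ, ((n : ℝ) + 1) ^ (-(2:ℝ))) Filter.atTop (nhds 0) := by
    have h1 : Filter.Tendsto (fun k : ℝ => (1/2 : ℝ) ^ (b * k))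
        Filter.atTop (nhds 0) := by
      have hbase := tendsto_rpow_atTop_of_base_lt_one (1/2 : ℝ)
        (by norm_num) (by norm_num)
      exact hbase.comp (Filter.Tendsto.const_mul_atTop hb Filter.tendsto_id)
    simpa using h1.mul_const _
  refine tendsto_of_tendsto_of_tendsto_of_le_of_le'
    tendsto_const_nhds hF ?_ ?_
  · filter_upwards [Filter.eventually_ge_atTop k₀] with k hk
    have hkpos : 0 < k := lt_of_lt_of_le hk₀pos hk
    exact tsum_nonneg fun n =>
      (Real.rpow_pos_of_pos (by positivity) _).le
  · filter_upwards [Filter.eventually_ge_atTop k₀] with k hk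
    calc (∑' n : ℕ, (a * ((n : ℝ) + 1) ^ (-q) / k) ^ (b * k * ((n : ℝ) + 1) ^ δ))
        ≤ ∑' n : ℕ, (1/2 : ℝ) ^ (b * k) * ((n : ℝ) + 1) ^ (-(2:ℝ)) :=
          Summable.tsum_le_tsum (key k hk) (hsum k hk) (hg.mul_left _)
      _ = (1/2 : ℝ) ^ (b * k) * ∑' n : ℕ, ((n : ℝ) + 1) ^ (-(2:ℝ)) :=
          tsum_mul_left
end
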